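/- For parameters a > 0 and b > 0, set c = (1 + e^{a·b})/e^{a·b} and d = 1/(1 + e^{a·b}), and define the normalized sigmoidal-like utility function U(x) = c·( 1/(1 + e^{−a·(x−b)}) − d ). Then the second derivative of x ↦ log(U(x)) is strictly negative for every x > 0; hence log ∘ U is strictly concave on (0, ∞). -/

import Mathlib

theorem sigmoid_log_second_deriv_neg_and_concave
    (a b : ℝ) (ha : 0 < a) (hb : 0 < b)
    (c d : ℝ) (hc : c = (1 + Real.exp (a * b)) / Real.exp (a * b))
    (hd : d = 1 / (1 + Real.exp (a * b)))
    (U : ℝ → ℝ)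
    (hU : ∀ x : ℝ, U x = c * (1 / (1 + Real.exp (-a * (x - b))) - d)) :
    (∀ x : ℝ, 0 < x → deriv (deriv (fun y => Real.log (U y))) x < 0) ∧
    StrictConcaveOn ℝ (Set.Ioi 0) (fun y => Real.log (U y)) := by
  have hE : (0:ℝ) < Real.exp (a*b) := Real.exp_pos _
  set E := Real.exp (a*b) with hEdef
  -- closed form for U
  have hU' : ∀ x : ℝ, U x = (Real.exp (a*x) - 1) / (Real.exp (a*x) + E) := by
    intro x
    have hux : (0:ℝ) < Real.exp (a*x) := Real.exp_pos _
    have harg : -a * (x - b) = a*b - a*x := by ring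
    rw [hU, hc, hd, harg, Real.exp_sub]
    have h1 : (0:ℝ) < 1 + E / Real.exp (a*x) := by positivity
    have h2 : (0:ℝ) < 1 + E := by positivity
    have h3 : (0:ℝ) < Real.exp (a*x) + E := by positivity
    field_simp
    ring
  have hugt : ∀ x : ℝ, 0 < x → (1:ℝ) < Real.exp (a*x) := by
    intro x hx
    have : (0:ℝ) < a*x := by positivity
    calc (1:ℝ) = Real.exp 0 := (Real.exp_zero).symm
      _ < Real.exp (a*x) := Real.exp_lt_exp.2 this
  set f := fun y : ℝ => Real.log (Real.exp (a*y) - 1) - Real.log (Real.exp (a*y) + E)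
    with hfdef
  have heq : ∀ x : ℝ, 0 < x → Real.log (U x) = f x := by
    intro x hx
    have hu1 := hugt x hx
    rw [hU' x, Real.log_div (by linarith) (by positivity)]
  set g := fun y : ℝ => Real.exp (a*y) * a / (Real.exp (a*y) - 1)
      - Real.exp (a*y) * a / (Real.exp (a*y) + E) with hgdef
  have hexp : ∀ y : ℝ, HasDerivAt (fun z => Real.exp (a*z)) (Real.exp (a*y) * a) y := by
    intro y
    have h0 : HasDerivAt (fun z : ℝ => a*z) a y := by
      simpa using (hasDerivAt_id y).const_mul a
    exact h0.exp
  have hfderiv : ∀ y : ℝ, 0 < y → HasDerivAt f (g y) y := by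
    intro y hy
    have hu1 := hugt y hy
    have hl1 := (((hexp y).sub_const 1).log (by linarith))
    have hl2 := (((hexp y).add_const E).log (by positivity))
    exact hl1.sub hl2
  have hev : ∀ x : ℝ, 0 < x → (fun y => Real.log (U y)) =ᶠ[nhds x] f := by
    intro x hx
    filter_upwards [Ioi_mem_nhds hx] with y hy using heq y hy
  have hderiv1 : ∀ x : ℝ, 0 < x → deriv (fun y => Real.log (U y)) =ᶠ[nhds x] g := by
    intro x hx
    refine (hev x hx).deriv.trans ?_
    filter_upwards [Ioi_mem_nhds hx] with y hy
    exact (hfderiv y hy).deriv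
  have hsecond : ∀ x : ℝ, 0 < x →
      deriv (deriv (fun y => Real.log (U y))) x = deriv g x :=
    fun x hx => (hderiv1 x hx).deriv_eq
  have hgderiv : ∀ x : ℝ, 0 < x → HasDerivAt g
      (-(a^2 * Real.exp (a*x)) / (Real.exp (a*x) - 1)^2
       - a^2 * Real.exp (a*x) * E / (Real.exp (a*x) + E)^2) x := by
    intro x hx
    have hu1 := hugt x hx
    have hN : HasDerivAt (fun y => Real.exp (a*y) * a) (Real.exp (a*x) * a * a) x :=
      (hexp x).mul_const a
    have hD1 := (hexp x).sub_const 1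
    have hD2 := (hexp x).add_const E
    have ht1 := hN.div hD1 (by linarith)
    have ht2 := hN.div hD2 (by positivity)
    have hsum := ht1.sub ht2
    convert hsum using 1
    · rfl
    · rfl
    · rfl
    have h1 : Real.exp (a*x) - 1 ≠ 0 := by linarith
    have h2 : Real.exp (a*x) + E ≠ 0 := by positivity
    field_simp
    ring
  have part1 : ∀ x : ℝ, 0 < x → deriv (deriv (fun y => Real.log (U y))) x < 0 := by
    intro x hx
    rw [hsecond x hx, (hgderiv x hx).deriv]
    have hu1 := hugt x hx
    have hux : (0:ℝ) < Real.exp (a*x) := Real.exp_pos _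
    have h1 : (0:ℝ) < (a^2 * Real.exp (a*x)) / (Real.exp (a*x) - 1)^2 := by
      apply div_pos (by positivity)
      have : Real.exp (a*x) - 1 > 0 := by linarith
      positivity
    have h2 : (0:ℝ) < a^2 * Real.exp (a*x) * E / (Real.exp (a*x) + E)^2 := by
      positivity
    have : -(a^2 * Real.exp (a*x)) / (Real.exp (a*x) - 1)^2
        = -((a^2 * Real.exp (a*x)) / (Real.exp (a*x) - 1)^2) := by ring
    rw [this]
    linarith
  refine ⟨part1, ?_⟩
  apply strictConcaveOn_of_deriv2_neg (convex_Ioi 0)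
  · intro x hx
    have hx' : (0:ℝ) < x := hx
    exact ((hfderiv x hx').differentiableAt.continuousAt.congr
      (hev x hx').symm).continuousWithinAt
  · intro x hx
    rw [interior_Ioi] at hx
    have := part1 x hx
    simpa [Function.iterate_succ, Function.comp] using this
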